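/- Let G and H be graphs. If the Kronecker double coverings K_2 × G and K_2 × H are isomorphic as graphs, then the neighborhood complexes N(G) and N(H) are isomorphic as abstract simplicial complexes. -/

import Mathlib

/-- A graph: a vertex type with a symmetric edge relation (loops allowed). -/
structure LGraph where
  V : Type
  E : V → V → Prop
  symm : ∀ ⦃x y⦄, E x y → E y x

/-- LGraph homomorphisms. -/
def LGraph.Hom (G H : LGraph) : Type :=
  {f : G.V → H.V // ∀ ⦃x y⦄, G.E x y → H.E (f x) (f y)}

/-- LGraph isomorphisms: bijective homomorphisms whose inverse is a homomorphism. -/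
structure LGraph.Iso (G H : LGraph) extends G.V ≃ H.V where
  edge_iff : ∀ x y, G.E x y ↔ H.E (toEquiv x) (toEquiv y)

/-- The complete graph `K₂` on two vertices. -/
def K2 : LGraph := ⟨Fin 2, fun x y => x ≠ y, fun _ _ h => h.symm⟩

/-- The tensor (categorical) product of graphs. -/
def LGraph.tensor (G H : LGraph) : LGraph :=
  ⟨G.V × H.V, fun p q => G.E p.1 q.1 ∧ H.E p.2 q.2,
   fun _ _ h => ⟨G.symm h.1, H.symm h.2⟩⟩

/-- No isolated vertices. -/
def LGraph.NoIsolated (G : LGraph) : Prop := ∀ x, ∃ y, G.E x y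

/-- An abstract simplicial complex, given by its vertex type and its simplices
(nonempty finite vertex sets). -/
structure SComplex where
  V : Type
  S : Finset V → Prop

/-- Isomorphism of abstract simplicial complexes: a bijection of vertex sets under
which a finite set is a simplex iff its image is a simplex. -/
def SComplex.Iso (A B : SComplex) : Prop :=
  ∃ e : A.V ≃ B.V, ∀ s : Finset A.V, A.S s ↔ B.S (s.map e.toEmbedding)

/-- The neighborhood complex `N(G)`: vertices are the non-isolated vertices of `G`,
simplices the nonempty finite sets contained in the neighborhood of some vertex. -/
def LGraph.NC (G : LGraph) : SComplex where
  V := {x : G.V // ∃ y, G.E x y}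
  S s := s.Nonempty ∧ ∃ v : G.V, ∀ x ∈ s, G.E v x.val

namespace KDC

def pinj (i : Fin 2) (α : Type) : α ↪ Fin 2 × α :=
  ⟨fun v => (i, v), fun a b h => congrArg Prod.snd h⟩

@[reducible] def Dbl (X : SComplex) : SComplex where
  V := Fin 2 × X.V
  S s := ∃ (i : Fin 2) (t : Finset X.V), t.Nonempty ∧ X.S t ∧ s = t.map (pinj i X.V)

def cn (X : SComplex) : X.V → X.V → Prop :=
  Relation.EqvGen (fun a b => ∃ s, X.S s ∧ a ∈ s ∧ b ∈ s)

def cnS (X : SComplex) : Setoid X.V := ⟨cn X, Relation.EqvGen.is_equivalence _⟩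

@[reducible] def rst (X : SComplex) (p : X.V → Prop) : SComplex where
  V := {v // p v}
  S s := X.S (s.map (Function.Embedding.subtype p))

lemma map_symm_map {α β : Type} (e : α ≃ β) (s : Finset β) :
    (s.map e.symm.toEmbedding).map e.toEmbedding = s := by
  rw [Finset.map_map]; ext x; simp

lemma iso_refl (X : SComplex) : X.Iso X := ⟨Equiv.refl _, by simp⟩

lemma iso_symm {X Y : SComplex} (h : X.Iso Y) : Y.Iso X := by
  obtain ⟨e, he⟩ := h
  exact ⟨e.symm, fun s => by rw [he (s.map e.symm.toEmbedding), map_symm_map]⟩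

lemma iso_trans {X Y Z : SComplex} (h1 : X.Iso Y) (h2 : Y.Iso Z) : X.Iso Z := by
  obtain ⟨e, he⟩ := h1; obtain ⟨f, hf⟩ := h2
  refine ⟨e.trans f, fun s => ?_⟩
  rw [he, hf, Finset.map_map]
  rfl

lemma cn_of_mem {X : SComplex} {s} (hs : X.S s) {a b} (ha : a ∈ s) (hb : b ∈ s) : cn X a b :=
  Relation.EqvGen.rel _ _ ⟨s, hs, ha, hb⟩

lemma cn_map {X Y : SComplex} (e : X.V ≃ Y.V)
    (he : ∀ s, X.S s → Y.S (s.map e.toEmbedding)) {a b} (h : cn X a b) :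
    cn Y (e a) (e b) := by
  induction h with
  | rel a b h =>
      obtain ⟨s, hs, ha, hb⟩ := h
      exact Relation.EqvGen.rel _ _ ⟨s.map e.toEmbedding, he s hs,
        Finset.mem_map_of_mem _ ha, Finset.mem_map_of_mem _ hb⟩
  | refl a => exact Relation.EqvGen.refl _
  | symm a b _ ih => exact Relation.EqvGen.symm _ _ ih
  | trans a b c _ _ ih1 ih2 => exact Relation.EqvGen.trans _ _ _ ih1 ih2

lemma he_symm {X Y : SComplex} (e : X.V ≃ Y.V)
    (he : ∀ s, X.S s ↔ Y.S (s.map e.toEmbedding)) :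
    ∀ s, Y.S s ↔ X.S (s.map e.symm.toEmbedding) := fun s => by
  rw [he (s.map e.symm.toEmbedding), map_symm_map]

lemma cn_iff {X Y : SComplex} (e : X.V ≃ Y.V)
    (he : ∀ s, X.S s ↔ Y.S (s.map e.toEmbedding)) (a b : X.V) :
    cn X a b ↔ cn Y (e a) (e b) := by
  constructor
  · exact cn_map e (fun s hs => (he s).1 hs)
  · intro h
    have := cn_map e.symm (fun s hs => (he_symm e he s).1 hs) h
    simpa using this

lemma cn_dbl_down {X : SComplex} {p q : (Dbl X).V} (h : cn (Dbl X) p q) :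
    p.1 = q.1 ∧ cn X p.2 q.2 := by
  induction h with
  | rel p q h =>
      obtain ⟨s, ⟨i, t, _, ht, rfl⟩, hp, hq⟩ := h
      simp only [Finset.mem_map] at hp hq
      obtain ⟨x, hx, rfl⟩ := hp
      obtain ⟨y, hy, rfl⟩ := hq
      exact ⟨rfl, cn_of_mem ht hx hy⟩
  | refl p => exact ⟨rfl, Relation.EqvGen.refl _⟩
  | symm _ _ _ ih => exact ⟨ih.1.symm, Relation.EqvGen.symm _ _ ih.2⟩
  | trans _ _ _ _ _ ih1 ih2 => exact ⟨ih1.1.trans ih2.1, Relation.EqvGen.trans _ _ _ ih1.2 ih2.2⟩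

lemma cn_dbl_up {X : SComplex} (i : Fin 2) {a b : X.V} (h : cn X a b) :
    cn (Dbl X) (i, a) (i, b) := by
  induction h with
  | rel a b h =>
      obtain ⟨s, hs, ha, hb⟩ := h
      exact Relation.EqvGen.rel _ _ ⟨s.map (pinj i X.V), ⟨i, s, ⟨a, ha⟩, hs, rfl⟩,
        Finset.mem_map_of_mem _ ha, Finset.mem_map_of_mem _ hb⟩
  | refl a => exact Relation.EqvGen.refl _
  | symm a b _ ih => exact Relation.EqvGen.symm _ _ ih
  | trans a b c _ _ ih1 ih2 => exact Relation.EqvGen.trans _ _ _ ih1 ih2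

end KDC

namespace KDC

theorem key_iso {X Y : SComplex}
    (hX : ∀ s, X.S s → s.Nonempty) (hY : ∀ s, Y.S s → s.Nonempty)
    (e : (Fin 2 × X.V) ≃ (Fin 2 × Y.V))
    (he : ∀ s : Finset (Fin 2 × X.V), (Dbl X).S s ↔ (Dbl Y).S (s.map e.toEmbedding))
    (i : Fin 2) (a : X.V) :
    SComplex.Iso (rst X (fun v => Quotient.mk (cnS X) v = Quotient.mk (cnS X) a))
      (rst Y (fun w => Quotient.mk (cnS Y) w = Quotient.mk (cnS Y) (e (i, a)).2)) := by
  have hcn : ∀ p q, cn (Dbl X) p q ↔ cn (Dbl Y) (e p) (e q) := cn_iff (X := Dbl X) (Y := Dbl Y) e he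
  set j : Fin 2 := (e (i, a)).1 with hj
  set b : Y.V := (e (i, a)).2 with hb
  have heta : e (i, a) = (j, b) := rfl
  have him : ∀ v, cn X a v → (e (i, v)).1 = j ∧ cn Y b (e (i, v)).2 := by
    intro v hv
    have h1 : cn (Dbl X) (i, a) (i, v) := cn_dbl_up i hv
    have h2 : cn (Dbl Y) (e (i, a)) (e (i, v)) := (hcn _ _).1 h1
    have h3 := cn_dbl_down h2
    exact ⟨h3.1.symm, h3.2⟩
  have hpre : ∀ w, cn Y b w → (e.symm (j, w)).1 = i ∧ cn X a (e.symm (j, w)).2 := by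
    intro w hw
    have h1 : cn (Dbl Y) (e (i, a)) (j, w) := cn_dbl_up j hw
    have h2 : cn (Dbl Y) (e (i, a)) (e (e.symm (j, w))) := by
      rwa [Equiv.apply_symm_apply]
    have h3 : cn (Dbl X) (i, a) (e.symm (j, w)) := (hcn _ _).2 h2
    have h4 := cn_dbl_down h3
    exact ⟨h4.1.symm, h4.2⟩
  -- translate predicates
  have predX : ∀ v, (Quotient.mk (cnS X) v = Quotient.mk (cnS X) a) ↔ cn X a v := by
    intro v
    constructor
    · intro h; exact (cnS X).iseqv.symm (Quotient.exact h)
    · intro h; exact Quotient.sound ((cnS X).iseqv.symm h)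
  have predY : ∀ w, (Quotient.mk (cnS Y) w = Quotient.mk (cnS Y) b) ↔ cn Y b w := by
    intro w
    constructor
    · intro h; exact (cnS Y).iseqv.symm (Quotient.exact h)
    · intro h; exact Quotient.sound ((cnS Y).iseqv.symm h)
  set F : {v // Quotient.mk (cnS X) v = Quotient.mk (cnS X) a} ≃
      {w // Quotient.mk (cnS Y) w = Quotient.mk (cnS Y) b} :=
    { toFun := fun v => ⟨(e (i, v.1)).2, (predY _).2 (him v.1 ((predX _).1 v.2)).2⟩
      invFun := fun w => ⟨(e.symm (j, w.1)).2, (predX _).2 (hpre w.1 ((predY _).1 w.2)).2⟩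
      left_inv := by
        rintro ⟨v, hv⟩
        have hf : (e (i, v)).1 = j := (him v ((predX _).1 hv)).1
        apply Subtype.ext
        show (e.symm (j, (e (i, v)).2)).2 = v
        have : (j, (e (i, v)).2) = e (i, v) := Prod.ext hf.symm rfl
        rw [this, Equiv.symm_apply_apply]
      right_inv := by
        rintro ⟨w, hw⟩
        have hf : (e.symm (j, w)).1 = i := (hpre w ((predY _).1 hw)).1
        apply Subtype.ext
        show (e (i, (e.symm (j, w)).2)).2 = w
        have : (i, (e.symm (j, w)).2) = e.symm (j, w) := Prod.ext hf.symm rfl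
        rw [this, Equiv.apply_symm_apply] } with hF
  refine ⟨F, fun s => ?_⟩
  show X.S (s.map (Function.Embedding.subtype _)) ↔
    Y.S ((s.map F.toEmbedding).map (Function.Embedding.subtype _))
  rcases s.eq_empty_or_nonempty with rfl | ⟨v₀, hv₀⟩
  · simp only [Finset.map_empty]
    constructor
    · intro h; exact absurd (hX _ h) (by simp)
    · intro h; exact absurd (hY _ h) (by simp)
  · constructor
    · intro hs
      set t : Finset X.V := s.map (Function.Embedding.subtype _) with ht
      have htne : t.Nonempty := ⟨v₀.1, Finset.mem_map_of_mem _ hv₀⟩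
      have hD : (Dbl X).S (t.map (pinj i X.V)) := ⟨i, t, htne, hs, rfl⟩
      have hD2 := (he _).1 hD
      obtain ⟨j', t', ht'ne, ht', hEq⟩ := hD2
      -- every element of the mapped set has the form e (i, v), v∈t, with fst = j
      have hmemE : ∀ p, p ∈ (t.map (pinj i X.V)).map e.toEmbedding ↔
          ∃ v ∈ s, e (i, v.1) = p := by
        intro p
        simp only [Finset.mem_map, ht, pinj, Function.Embedding.coeFn_mk,
          Equiv.coe_toEmbedding, Function.Embedding.coe_subtype]
        constructor
        · rintro ⟨q, ⟨x, ⟨w, hw, rfl⟩, rfl⟩, rfl⟩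
          exact ⟨w, hw, rfl⟩
        · rintro ⟨v, hv, rfl⟩
          exact ⟨(i, v.1), ⟨v.1, ⟨v, hv, rfl⟩, rfl⟩, rfl⟩
      have hfst : ∀ v ∈ s, (e (i, v.1)).1 = j := fun v hv =>
        (him v.1 ((predX _).1 v.2)).1
      have hjj : j' = j := by
        have h1 : e (i, v₀.1) ∈ t'.map (pinj j' Y.V) := by
          rw [← hEq, hmemE]; exact ⟨v₀, hv₀, rfl⟩
        simp only [Finset.mem_map, pinj, Function.Embedding.coeFn_mk] at h1
        obtain ⟨w, _, hw⟩ := h1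
        have h2 := congrArg Prod.fst hw
        change j' = (e (i, v₀.1)).1 at h2
        rw [h2]; exact hfst v₀ hv₀
      rw [hjj] at hEq
      have hteq : (s.map F.toEmbedding).map (Function.Embedding.subtype _) = t' := by
        ext w
        constructor
        · intro hw
          simp only [Finset.mem_map, Equiv.coe_toEmbedding,
            Function.Embedding.coe_subtype] at hw
          obtain ⟨x, ⟨v, hv, rfl⟩, rfl⟩ := hw
          have h1 : e (i, v.1) ∈ t'.map (pinj j Y.V) := by
            rw [← hEq, hmemE]; exact ⟨v, hv, rfl⟩
          simp only [Finset.mem_map, pinj, Function.Embedding.coeFn_mk] at h1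
          obtain ⟨w', hw', hw2⟩ := h1
          have hval : ((F v : _) : Y.V) = (e (i, (v : X.V))).2 := rfl
          have hsnd : w' = (e (i, (v : X.V))).2 := congrArg Prod.snd hw2
          rw [hval, ← hsnd]
          exact hw'
        · intro hw
          have h1 : (pinj j Y.V) w ∈ t'.map (pinj j Y.V) := Finset.mem_map_of_mem _ hw
          rw [← hEq, hmemE] at h1
          obtain ⟨v, hv, hveq⟩ := h1
          simp only [Finset.mem_map, Equiv.coe_toEmbedding,
            Function.Embedding.coe_subtype]
          refine ⟨F v, ⟨v, hv, rfl⟩, ?_⟩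
          show (e (i, v.1)).2 = w
          rw [hveq]
          rfl
      rw [hteq]; exact ht'
    · intro hs
      set u : Finset Y.V := (s.map F.toEmbedding).map (Function.Embedding.subtype _) with hu
      have hune : u.Nonempty := ⟨(F v₀).1, by
        simp only [hu, Finset.mem_map, Equiv.coe_toEmbedding, Function.Embedding.coe_subtype]
        exact ⟨F v₀, ⟨v₀, hv₀, rfl⟩, rfl⟩⟩
      have hD : (Dbl Y).S (u.map (pinj j Y.V)) := ⟨j, u, hune, hs, rfl⟩
      have hmapeq : u.map (pinj j Y.V) =
          ((s.map (Function.Embedding.subtype _)).map (pinj i X.V)).map e.toEmbedding := by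
        ext p
        simp only [hu, Finset.mem_map, pinj, Function.Embedding.coeFn_mk,
          Equiv.coe_toEmbedding, Function.Embedding.coe_subtype]
        constructor
        · rintro ⟨w, ⟨x, ⟨v, hv, rfl⟩, rfl⟩, rfl⟩
          refine ⟨(i, v.1), ⟨v.1, ⟨v, hv, rfl⟩, rfl⟩, ?_⟩
          have hf : (e (i, v.1)).1 = j := (him v.1 ((predX _).1 v.2)).1
          show e (i, v.1) = (j, (F v).1)
          exact Prod.ext hf rfl
        · rintro ⟨q, ⟨x, ⟨v, hv, rfl⟩, rfl⟩, rfl⟩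
          refine ⟨(F v).1, ⟨F v, ⟨v, hv, rfl⟩, rfl⟩, ?_⟩
          have hf : (e (i, v.1)).1 = j := (him v.1 ((predX _).1 v.2)).1
          show (j, (e (i, v.1)).2) = e (i, v.1)
          exact Prod.ext hf.symm rfl
      rw [hmapeq] at hD
      have hD2 := (he _).2 hD
      obtain ⟨i'', t'', ht''ne, ht'', hEq2⟩ := hD2
      have hii : i'' = i := by
        have h1 : (i, v₀.1) ∈ t''.map (pinj i'' X.V) := by
          rw [← hEq2]
          exact Finset.mem_map_of_mem _ (Finset.mem_map_of_mem _ hv₀)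
        simp only [Finset.mem_map, pinj, Function.Embedding.coeFn_mk] at h1
        obtain ⟨x, _, hx⟩ := h1
        exact (congrArg Prod.fst hx)
      subst hii
      have : s.map (Function.Embedding.subtype _) = t'' :=
        Finset.map_injective (pinj i'' X.V) hEq2
      rw [this]; exact ht''

end KDC

namespace KDC

lemma two_lt_aleph0 : (2 : Cardinal) < Cardinal.aleph0 := by
  exact_mod_cast Cardinal.nat_lt_aleph0 2

lemma two_mul_inf {κ : Cardinal} (hk : Cardinal.aleph0 ≤ κ) : 2 * κ = κ :=
  Cardinal.mul_eq_right hk (le_trans two_lt_aleph0.le hk) two_ne_zero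

lemma two_mul_cancel {κ μ : Cardinal} (h : 2 * κ = 2 * μ) : κ = μ := by
  rcases lt_or_ge κ Cardinal.aleph0 with hk | hk
  · rcases lt_or_ge μ Cardinal.aleph0 with hm | hm
    · obtain ⟨n, rfl⟩ := Cardinal.lt_aleph0.1 hk
      obtain ⟨m, rfl⟩ := Cardinal.lt_aleph0.1 hm
      have h2 : (2 * n : ℕ) = (2 * m : ℕ) := by exact_mod_cast h
      have h3 : n = m := by omega
      rw [h3]
    · exfalso
      rw [two_mul_inf hm] at h
      have h1 : 2 * κ < Cardinal.aleph0 := Cardinal.mul_lt_aleph0 two_lt_aleph0 hk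
      exact absurd (h ▸ h1) (not_lt.2 hm)
  · rcases lt_or_ge μ Cardinal.aleph0 with hm | hm
    · exfalso
      rw [two_mul_inf hk] at h
      have h1 : 2 * μ < Cardinal.aleph0 := Cardinal.mul_lt_aleph0 two_lt_aleph0 hm
      exact absurd (h.symm ▸ h1) (not_lt.2 hk)
    · rw [two_mul_inf hk, two_mul_inf hm] at h
      exact h

end KDC

namespace KDC

theorem cancel {X Y : SComplex}
    (hX : ∀ s, X.S s → s.Nonempty) (hY : ∀ s, Y.S s → s.Nonempty)
    (e : (Fin 2 × X.V) ≃ (Fin 2 × Y.V))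
    (he : ∀ s : Finset (Fin 2 × X.V), (Dbl X).S s ↔ (Dbl Y).S (s.map e.toEmbedding)) :
    X.Iso Y := by
  classical
  have hcn : ∀ p q, cn (Dbl X) p q ↔ cn (Dbl Y) (e p) (e q) :=
    cn_iff (X := Dbl X) (Y := Dbl Y) e he
  -- quotient by components
  let QX := Quotient (cnS X)
  let QY := Quotient (cnS Y)
  let QDX := Quotient (cnS (Dbl X))
  let QDY := Quotient (cnS (Dbl Y))
  let eq1X : Fin 2 × QX ≃ QDX :=
    { toFun := fun p => Quotient.map (fun a => (p.1, a))
        (fun a b hab => cn_dbl_up p.1 hab) p.2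
      invFun := fun q => Quotient.lift
        (fun r : Fin 2 × X.V => ((r.1, Quotient.mk (cnS X) r.2) : Fin 2 × QX))
        (fun r r' hrr => by
          have h := cn_dbl_down hrr
          exact Prod.ext h.1 (Quotient.sound h.2)) q
      left_inv := by
        rintro ⟨i, c⟩
        induction c using Quotient.ind with
        | _ a => rfl
      right_inv := by
        intro q
        induction q using Quotient.ind with
        | _ p => rfl }
  let eq1Y : Fin 2 × QY ≃ QDY :=
    { toFun := fun p => Quotient.map (fun a => (p.1, a))
        (fun a b hab => cn_dbl_up p.1 hab) p.2
      invFun := fun q => Quotient.lift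
        (fun r : Fin 2 × Y.V => ((r.1, Quotient.mk (cnS Y) r.2) : Fin 2 × QY))
        (fun r r' hrr => by
          have h := cn_dbl_down hrr
          exact Prod.ext h.1 (Quotient.sound h.2)) q
      left_inv := by
        rintro ⟨i, c⟩
        induction c using Quotient.ind with
        | _ a => rfl
      right_inv := by
        intro q
        induction q using Quotient.ind with
        | _ p => rfl }
  let EE' : QDX ≃ QDY := Quotient.congr e hcn
  let EE : Fin 2 × QX ≃ Fin 2 × QY := eq1X.trans (EE'.trans eq1Y.symm)
  have EEcomp : ∀ (i : Fin 2) (a : X.V),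
      EE (i, Quotient.mk (cnS X) a) = ((e (i, a)).1, Quotient.mk (cnS Y) (e (i, a)).2) := by
    intro i a; rfl
  -- setoid of iso classes of components
  let rc : QX ⊕ QY → SComplex := Sum.elim
    (fun c => rst X (fun v => Quotient.mk (cnS X) v = c))
    (fun d => rst Y (fun w => Quotient.mk (cnS Y) w = d))
  let S0 : Setoid (QX ⊕ QY) :=
    ⟨fun u v => (rc u).Iso (rc v), ⟨fun u => iso_refl _, iso_symm, iso_trans⟩⟩
  let Z := Quotient S0
  let zmap : QX ⊕ QY → Z := Quotient.mk S0
  have matched : ∀ p : Fin 2 × QX, zmap (Sum.inl p.2) = zmap (Sum.inr (EE p).2) := by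
    rintro ⟨i, c⟩
    induction c using Quotient.ind with
    | _ a =>
      have h1 : (EE (i, Quotient.mk (cnS X) a)).2 = Quotient.mk (cnS Y) (e (i, a)).2 := by
        rw [EEcomp]
      rw [h1]
      exact Quotient.sound (key_iso hX hY e he i a)
  let PX : Z → Type := fun z => {c : QX // zmap (Sum.inl c) = z}
  let PY : Z → Type := fun z => {d : QY // zmap (Sum.inr d) = z}
  have card : ∀ z, Cardinal.mk (PX z) = Cardinal.mk (PY z) := by
    intro z
    have em1 : (Fin 2 × PX z) ≃ {p : Fin 2 × QX // zmap (Sum.inl p.2) = z} :=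
      { toFun := fun x => ⟨(x.1, x.2.1), x.2.2⟩
        invFun := fun y => (y.1.1, ⟨y.1.2, y.2⟩)
        left_inv := fun x => rfl
        right_inv := fun y => rfl }
    have em2 : (Fin 2 × PY z) ≃ {q : Fin 2 × QY // zmap (Sum.inr q.2) = z} :=
      { toFun := fun x => ⟨(x.1, x.2.1), x.2.2⟩
        invFun := fun y => (y.1.1, ⟨y.1.2, y.2⟩)
        left_inv := fun x => rfl
        right_inv := fun y => rfl }
    have mid : {p : Fin 2 × QX // zmap (Sum.inl p.2) = z} ≃
        {q : Fin 2 × QY // zmap (Sum.inr q.2) = z} :=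
      Equiv.subtypeEquiv EE (fun p => by rw [matched p])
    have FE : (Fin 2 × PX z) ≃ (Fin 2 × PY z) := em1.trans (mid.trans em2.symm)
    have hmk := Cardinal.mk_congr FE
    have h1 : Cardinal.mk (Fin 2 × PX z) = 2 * Cardinal.mk (PX z) := by
      simp [Cardinal.mk_prod, Cardinal.lift_id]
    have h2 : Cardinal.mk (Fin 2 × PY z) = 2 * Cardinal.mk (PY z) := by
      simp [Cardinal.mk_prod, Cardinal.lift_id]
    exact two_mul_cancel (h1 ▸ h2 ▸ hmk)
  have nemp : ∀ z, Nonempty (PX z ≃ PY z) := fun z => Cardinal.eq.1 (card z)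
  let g : ∀ z, PX z ≃ PY z := fun z => (nemp z).some
  let E0 : QX ≃ QY :=
    ((Equiv.sigmaFiberEquiv (fun c : QX => zmap (Sum.inl c))).symm).trans
      ((Equiv.sigmaCongrRight g).trans
        (Equiv.sigmaFiberEquiv (fun d : QY => zmap (Sum.inr d))))
  have E0spec : ∀ c, zmap (Sum.inr (E0 c)) = zmap (Sum.inl c) := fun c =>
    (g (zmap (Sum.inl c)) ⟨c, rfl⟩).2
  have E0rel : ∀ c, (rc (Sum.inl c)).Iso (rc (Sum.inr (E0 c))) := fun c =>
    Quotient.exact (E0spec c).symm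
  let ψ : ∀ c : QX, (rc (Sum.inl c)).V ≃ (rc (Sum.inr (E0 c))).V :=
    fun c => (E0rel c).choose
  have ψs : ∀ (c : QX) (s : Finset (rc (Sum.inl c)).V),
      (rc (Sum.inl c)).S s ↔ (rc (Sum.inr (E0 c))).S (s.map (ψ c).toEmbedding) :=
    fun c => (E0rel c).choose_spec
  let qmk : X.V → QX := Quotient.mk (cnS X)
  let qmkY : Y.V → QY := Quotient.mk (cnS Y)
  let f : X.V → Y.V := fun v => (ψ (qmk v) ⟨v, rfl⟩).1
  have fspec : ∀ (v : X.V) (c : QX) (h : qmk v = c), f v = (ψ c ⟨v, h⟩).1 := by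
    intro v c h; subst h; rfl
  have fclass : ∀ v, qmkY (f v) = E0 (qmk v) := fun v => (ψ (qmk v) ⟨v, rfl⟩).2
  have finj : Function.Injective f := by
    intro v v' h
    have h1 : E0 (qmk v) = E0 (qmk v') := by rw [← fclass, ← fclass, h]
    have hc : qmk v = qmk v' := E0.injective h1
    have h2 : f v = (ψ (qmk v') ⟨v, hc⟩).1 := fspec v _ hc
    have h3 : f v' = (ψ (qmk v') ⟨v', rfl⟩).1 := fspec v' _ rfl
    have h4 : ψ (qmk v') ⟨v, hc⟩ = ψ (qmk v') ⟨v', rfl⟩ :=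
      Subtype.ext (by rw [← h2, ← h3, h])
    have h5 := (ψ (qmk v')).injective h4
    exact congrArg Subtype.val h5
  have fsurj : Function.Surjective f := by
    intro w
    have hd : qmkY w = E0 (E0.symm (qmkY w)) := (E0.apply_symm_apply _).symm
    let x : (rc (Sum.inl (E0.symm (qmkY w)))).V := (ψ (E0.symm (qmkY w))).symm ⟨w, hd⟩
    refine ⟨x.1, ?_⟩
    have h1 : f x.1 = (ψ (E0.symm (qmkY w)) ⟨x.1, x.2⟩).1 := fspec x.1 _ x.2
    rw [h1]
    have h2 : (⟨x.1, x.2⟩ : (rc (Sum.inl (E0.symm (qmkY w)))).V) = x := rfl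
    rw [h2]
    exact congrArg Subtype.val ((ψ (E0.symm (qmkY w))).apply_symm_apply ⟨w, hd⟩)
  let ε : X.V ≃ Y.V := Equiv.ofBijective f ⟨finj, fsurj⟩
  refine ⟨ε, fun s => ?_⟩
  have hεf : ∀ v, ε v = f v := fun v => rfl
  rcases s.eq_empty_or_nonempty with rfl | ⟨a, ha⟩
  · simp only [Finset.map_empty]
    constructor
    · intro h; exact absurd (hX _ h) (by simp)
    · intro h; exact absurd (hY _ h) (by simp)
  · set c := qmk a with hc
    have main : (∀ v ∈ s, qmk v = c) →
        ((s.subtype (fun v => qmk v = c)).map (ψ c).toEmbedding).map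
            (Function.Embedding.subtype _) = s.map ε.toEmbedding := by
      intro hall
      ext w
      constructor
      · intro hw
        have hw := Finset.mem_map.1 hw
        obtain ⟨y, hy, rfl⟩ := hw
        have hy := Finset.mem_map.1 hy
        obtain ⟨x, hx, rfl⟩ := hy
        have hx := Finset.mem_subtype.1 hx
        rw [Finset.mem_map]
        refine ⟨x.1, hx, ?_⟩
        show f x.1 = ((ψ c) x).1
        exact fspec x.1 c x.2
      · intro hw
        rw [Finset.mem_map] at hw
        obtain ⟨v, hv, rfl⟩ := hw
        refine Finset.mem_map.2 ?_
        refine ⟨(ψ c) ⟨v, hall v hv⟩, ?_, ?_⟩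
        · refine Finset.mem_map.2 ?_
          exact ⟨⟨v, hall v hv⟩, Finset.mem_subtype.2 hv, rfl⟩
        · show ((ψ c) ⟨v, hall v hv⟩).1 = f v
          exact (fspec v c (hall v hv)).symm
    have hsub : ∀ (hall : ∀ v ∈ s, qmk v = c),
        (s.subtype (fun v => qmk v = c)).map
          (Function.Embedding.subtype (fun v => qmk v = c)) = s := by
      intro hall
      rw [Finset.subtype_map]
      exact Finset.filter_true_of_mem hall
    constructor
    · intro hs
      have hall : ∀ v ∈ s, qmk v = c := fun v hv =>
        Quotient.sound (cn_of_mem hs hv ha)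
      have h1 : (rc (Sum.inl c)).S (s.subtype (fun v => qmk v = c)) := by
        show X.S _
        rw [hsub hall]
        exact hs
      have h2 := (ψs c _).1 h1
      have h3 : Y.S (((s.subtype (fun v => qmk v = c)).map (ψ c).toEmbedding).map
          (Function.Embedding.subtype _)) := h2
      rw [main hall] at h3
      exact h3
    · intro hs
      have hall : ∀ v ∈ s, qmk v = c := by
        intro v hv
        have hmv : ε.toEmbedding v ∈ s.map ε.toEmbedding := Finset.mem_map_of_mem _ hv
        have hma : ε.toEmbedding a ∈ s.map ε.toEmbedding := Finset.mem_map_of_mem _ ha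
        have h1 : cn Y (f v) (f a) := cn_of_mem hs hmv hma
        have h2 : qmkY (f v) = qmkY (f a) := Quotient.sound h1
        rw [fclass, fclass] at h2
        exact E0.injective h2
      have h3 : Y.S (((s.subtype (fun v => qmk v = c)).map (ψ c).toEmbedding).map
          (Function.Embedding.subtype _)) := by
        rw [main hall]
        exact hs
      have h1 : (rc (Sum.inl c)).S (s.subtype (fun v => qmk v = c)) := (ψs c _).2 h3
      have h4 : X.S ((s.subtype (fun v => qmk v = c)).map
          (Function.Embedding.subtype _)) := h1
      rw [hsub hall] at h4
      exact h4

end KDC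

namespace KDC

lemma fin2_ne (i : Fin 2) : i ≠ i + 1 := by revert i; decide

lemma fin2_eq_add_one {x y : Fin 2} (h : x ≠ y) : x = y + 1 := by
  revert h; revert x y; decide

def isoSymm {G H : LGraph} (φ : LGraph.Iso G H) : LGraph.Iso H G where
  toEquiv := φ.toEquiv.symm
  edge_iff := fun x y => by
    rw [φ.edge_iff]
    simp

def liftFun {G H : LGraph} (φ : LGraph.Iso (K2.tensor G) (K2.tensor H)) :
    Fin 2 × G.NC.V → Fin 2 × H.NC.V :=
  fun p => ((φ.toEquiv (p.1, p.2.1)).1, ⟨(φ.toEquiv (p.1, p.2.1)).2, by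
    obtain ⟨y, hy⟩ := p.2.2
    have hedge : (K2.tensor G).E (p.1, p.2.1) ((p.1 + 1 : Fin 2), y) := ⟨fin2_ne p.1, hy⟩
    have h2 := (φ.edge_iff _ _).1 hedge
    exact ⟨(φ.toEquiv ((p.1 + 1 : Fin 2), y)).2, h2.2⟩⟩)

def liftEquiv {G H : LGraph} (φ : LGraph.Iso (K2.tensor G) (K2.tensor H)) :
    (Fin 2 × G.NC.V) ≃ (Fin 2 × H.NC.V) where
  toFun := liftFun φ
  invFun := liftFun (isoSymm φ)
  left_inv := by
    rintro ⟨i, x, hx⟩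
    have h : φ.toEquiv.symm (φ.toEquiv (i, x)) = (i, x) := φ.toEquiv.symm_apply_apply _
    have h1 : (φ.toEquiv.symm (φ.toEquiv (i, x))).1 = i := congrArg Prod.fst h
    have h2 : (φ.toEquiv.symm (φ.toEquiv (i, x))).2 = x := congrArg Prod.snd h
    refine Prod.ext ?_ (Subtype.ext ?_)
    · exact h1
    · exact h2
  right_inv := by
    rintro ⟨i, x, hx⟩
    have h : φ.toEquiv (φ.toEquiv.symm (i, x)) = (i, x) := φ.toEquiv.apply_symm_apply _
    have h1 : (φ.toEquiv (φ.toEquiv.symm (i, x))).1 = i := congrArg Prod.fst h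
    have h2 : (φ.toEquiv (φ.toEquiv.symm (i, x))).2 = x := congrArg Prod.snd h
    refine Prod.ext ?_ (Subtype.ext ?_)
    · exact h1
    · exact h2

lemma eq_map_of_fst {α : Type} [DecidableEq α] (u : Finset (Fin 2 × α)) (j : Fin 2)
    (h : ∀ p ∈ u, p.1 = j) : u = (u.image Prod.snd).map (pinj j α) := by
  ext ⟨k, x⟩
  simp only [Finset.mem_map, Finset.mem_image, pinj, Function.Embedding.coeFn_mk]
  constructor
  · intro hm
    have h1 : k = j := h (k, x) hm
    refine ⟨x, ⟨(k, x), hm, rfl⟩, ?_⟩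
    rw [h1]
    rfl
  · rintro ⟨y, ⟨p, hp, rfl⟩, heq⟩
    have h1 : p.1 = j := h p hp
    injection heq with e1 e2
    subst e1
    subst e2
    rw [← h1]
    exact hp

lemma lift_forward {G H : LGraph} (φ : LGraph.Iso (K2.tensor G) (K2.tensor H)) :
    ∀ s, (Dbl G.NC).S s → (Dbl H.NC).S (s.map (liftEquiv φ).toEmbedding) := by
  classical
  rintro s ⟨i, t, htne, ⟨-, v, hv⟩, rfl⟩
  set w1 : Fin 2 := ((φ.toEquiv ((i + 1 : Fin 2), v)).1 : Fin 2) with hw1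
  set w2 : H.V := (φ.toEquiv ((i + 1 : Fin 2), v)).2 with hw2
  set u : Finset (Fin 2 × H.NC.V) :=
    (t.map (pinj i G.NC.V)).map (liftEquiv φ).toEmbedding with hu
  have hune : u.Nonempty := by
    rw [hu]; exact Finset.map_nonempty.2 (Finset.map_nonempty.2 htne)
  have humem : ∀ p ∈ u, p.1 = w1 + 1 ∧ H.E w2 p.2.1 := by
    intro p hp
    rw [hu, Finset.mem_map] at hp
    obtain ⟨q, hq, rfl⟩ := hp
    rw [Finset.mem_map] at hq
    obtain ⟨x, hx, rfl⟩ := hq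
    have hedge : (K2.tensor G).E ((i + 1 : Fin 2), v) (i, x.1) := ⟨(fin2_ne i).symm, hv x hx⟩
    have h2 := (φ.edge_iff _ _).1 hedge
    constructor
    · show ((φ.toEquiv (i, x.1)).1 : Fin 2) = w1 + 1
      exact fin2_eq_add_one (fun hc => h2.1 hc.symm)
    · exact h2.2
  have hEqmap : u = (u.image Prod.snd).map (pinj (w1 + 1) H.NC.V) :=
    eq_map_of_fst u (w1 + 1) (fun p hp => (humem p hp).1)
  refine ⟨w1 + 1, u.image Prod.snd, ?_, ⟨?_, w2, ?_⟩, hEqmap⟩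
  · rw [hEqmap] at hune
    exact Finset.map_nonempty.1 hune
  · rw [hEqmap] at hune
    exact Finset.map_nonempty.1 hune
  · intro y hy
    have h1 : (pinj (w1 + 1) H.NC.V) y ∈ (u.image Prod.snd).map (pinj (w1 + 1) H.NC.V) :=
      Finset.mem_map_of_mem _ hy
    rw [← hEqmap] at h1
    exact (humem _ h1).2

lemma lift_he {G H : LGraph} (φ : LGraph.Iso (K2.tensor G) (K2.tensor H)) :
    ∀ s, (Dbl G.NC).S s ↔ (Dbl H.NC).S (s.map (liftEquiv φ).toEmbedding) := by
  intro s
  constructor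
  · exact lift_forward φ s
  · intro h
    have h2 := lift_forward (isoSymm φ) _ h
    rw [Finset.map_map] at h2
    have h3 : (liftEquiv φ).toEmbedding.trans (liftEquiv (isoSymm φ)).toEmbedding =
        Function.Embedding.refl _ := by
      apply Function.Embedding.ext
      intro p
      exact (liftEquiv φ).left_inv p
    rwa [h3, Finset.map_refl] at h2

end KDC


/-- if the Kronecker double coverings `K₂ × G` and `K₂ × H` are
isomorphic as graphs, then `N(G) ≅ N(H)`. -/
theorem NC_iso_of_kronecker_iso (G H : LGraph)
    (h : Nonempty ((K2.tensor G).Iso (K2.tensor H))) : G.NC.Iso H.NC := by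
  obtain ⟨φ⟩ := h
  exact KDC.cancel (fun s hs => hs.1) (fun s hs => hs.1) (KDC.liftEquiv φ) (KDC.lift_he φ)
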